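/- Diamond-Free Lemma (Ruzsa–Szemerédi bound): For every ε > 0 there exists N > 0 such that for every finite simple graph G with more than N vertices in which every edge lies in exactly one triangle, one has |E(G)| ≤ ε·|V(G)|². -/

import Mathlib

open Finset
open scoped Classical

/-- Every edge of `G` lies in exactly one triangle. -/
def UniqueTriangles {V : Type*} (G : SimpleGraph V) : Prop :=
  ∀ u v : V, G.Adj u v → ∃! T : Set V,
    (∃ x y z : V, T = {x, y, z} ∧ G.Adj x y ∧ G.Adj y z ∧ G.Adj x z) ∧
    ({u, v} : Set V) ⊆ T

lemma uniqueTriangles_isTriSet {V : Type*} {G : SimpleGraph V} {s : Finset V}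
    (hs : s ∈ G.cliqueSet 3) :
    ∃ x y z : V, (s : Set V) = {x, y, z} ∧ G.Adj x y ∧ G.Adj y z ∧ G.Adj x z := by
  rw [SimpleGraph.mem_cliqueSet_iff, SimpleGraph.is3Clique_iff] at hs
  obtain ⟨a, b, c, hab, hac, hbc, rfl⟩ := hs
  exact ⟨a, b, c, by simp, hab, hbc, hac⟩

lemma uniqueTriangles_locallyLinear {V : Type*} {G : SimpleGraph V}
    (h : UniqueTriangles G) : G.LocallyLinear := by
  constructor
  · rintro s hs t ht hst
    rintro u ⟨hus, hut⟩ v ⟨hvs, hvt⟩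
    by_contra hne
    have huv : G.Adj u v := (SimpleGraph.mem_cliqueSet_iff.1 hs).1 hus hvs hne
    obtain ⟨T, -, hu⟩ := h u v huv
    have h1 : (s : Set V) = T := hu _ ⟨uniqueTriangles_isTriSet hs, by
      rw [Set.insert_subset_iff]; exact ⟨hus, Set.singleton_subset_iff.2 hvs⟩⟩
    have h2 : (t : Set V) = T := hu _ ⟨uniqueTriangles_isTriSet ht, by
      rw [Set.insert_subset_iff]; exact ⟨hut, Set.singleton_subset_iff.2 hvt⟩⟩
    exact hst (Finset.coe_injective (h1.trans h2.symm))
  · intro x y hxy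
    obtain ⟨T, ⟨⟨a, b, c, rfl, hab, hbc, hac⟩, hsub⟩, -⟩ := h x y hxy
    refine ⟨{a, b, c}, SimpleGraph.is3Clique_triple_iff.2 ⟨hab, hac, hbc⟩, ?_, ?_⟩
    · have := hsub (Set.mem_insert _ _); simpa using this
    · have := hsub (Set.mem_insert_of_mem _ rfl); simpa using this

/-- Triangles inject into any edge set whose removal makes the graph triangle-free. -/
lemma cliqueFinset_card_le_of_deleteEdges {V : Type} [Fintype V] (G : SimpleGraph V)
    (hG : G.EdgeDisjointTriangles) (s : Finset (Sym2 V)) (hs : s ⊆ G.edgeFinset)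
    (hfree : (G.deleteEdges ↑s).CliqueFree 3) :
    #(G.cliqueFinset 3) ≤ #s := by
  cases isEmpty_or_nonempty V with
  | inl hV =>
    have : G.cliqueFinset 3 = ∅ := by
      rw [SimpleGraph.cliqueFinset_eq_empty_iff]
      intro t ht
      obtain ⟨x, hx⟩ := Finset.card_pos.1 (by rw [ht.2]; norm_num)
      exact hV.elim x
    simp [this]
  | inr hV =>
  inhabit V
  have key : ∀ t : Finset V, ∃ e : Sym2 V, t ∈ G.cliqueFinset 3 → e ∈ s ∧ e ∈ t.sym2 := by
    intro t
    by_cases ht : t ∈ G.cliqueFinset 3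
    · rw [SimpleGraph.mem_cliqueFinset_iff, SimpleGraph.is3Clique_iff] at ht
      obtain ⟨a, b, c, hab, hac, hbc, rfl⟩ := ht
      by_cases h1 : s(a, b) ∈ s
      · exact ⟨s(a, b), fun _ => ⟨h1, by simp⟩⟩
      by_cases h2 : s(a, c) ∈ s
      · exact ⟨s(a, c), fun _ => ⟨h2, by simp⟩⟩
      by_cases h3 : s(b, c) ∈ s
      · exact ⟨s(b, c), fun _ => ⟨h3, by simp⟩⟩
      exfalso
      exact hfree {a, b, c} (SimpleGraph.is3Clique_triple_iff.2
        ⟨by simp [SimpleGraph.deleteEdges_adj, hab, h1],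
         by simp [SimpleGraph.deleteEdges_adj, hac, h2],
         by simp [SimpleGraph.deleteEdges_adj, hbc, h3]⟩)
    · exact ⟨s(default, default), fun h => absurd h ht⟩
  choose f hf using key
  apply Finset.card_le_card_of_injOn f (fun t ht => (hf t ht).1)
  intro t1 ht1 t2 ht2 he
  have hd : ¬(f t1).IsDiag :=
    G.not_isDiag_of_mem_edgeSet (SimpleGraph.mem_edgeFinset.1 (hs (hf t1 ht1).1))
  refine hG.mem_sym2_subsingleton hd ?_ ?_
  · exact ⟨SimpleGraph.mem_cliqueSet_iff.2 (SimpleGraph.mem_cliqueFinset_iff.1 ht1),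
      (hf t1 ht1).2⟩
  · exact ⟨SimpleGraph.mem_cliqueSet_iff.2 (SimpleGraph.mem_cliqueFinset_iff.1 ht2),
      he ▸ (hf t2 ht2).2⟩

/-- The Diamond-Free Lemma (Ruzsa–Szemerédi bound). -/
theorem diamond_free (ε : ℝ) (hε : 0 < ε) :
    ∃ N : ℕ, 0 < N ∧ ∀ (V : Type) [Fintype V] (G : SimpleGraph V),
      N < Fintype.card V → UniqueTriangles G →
      (G.edgeSet.ncard : ℝ) ≤ ε * (Fintype.card V : ℝ) ^ 2 := by
  set ε' := min (ε / 3) (1 / 4) with hε'def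
  have hε'pos : 0 < ε' := lt_min (by linarith) (by norm_num)
  set δ := SimpleGraph.triangleRemovalBound ε' with hδdef
  have hδpos : 0 < δ := SimpleGraph.triangleRemovalBound_pos hε'pos
  refine ⟨⌈1 / δ⌉₊ + 1, Nat.succ_pos _, fun V _ G hn hUT => ?_⟩
  have hLL := uniqueTriangles_locallyLinear hUT
  -- basic counts
  have hedge_eq : #G.edgeFinset = 3 * #(G.cliqueFinset 3) := hLL.card_edgeFinset
  have hedge_le : #G.edgeFinset ≤ Fintype.card V ^ 2 := by
    refine SimpleGraph.card_edgeFinset_le_card_choose_two.trans ?_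
    rw [Nat.choose_two_right]
    calc Fintype.card V * (Fintype.card V - 1) / 2
        ≤ Fintype.card V * (Fintype.card V - 1) := Nat.div_le_self _ _
      _ ≤ Fintype.card V * Fintype.card V := Nat.mul_le_mul_left _ (Nat.sub_le _ _)
      _ = Fintype.card V ^ 2 := (sq (Fintype.card V)).symm
  have hclique_le : #(G.cliqueFinset 3) ≤ Fintype.card V ^ 2 := by omega
  -- the graph is not far from triangle-free
  have hnotfar : ¬ G.FarFromTriangleFree ε' := by
    intro hFar
    have h1 : δ * (Fintype.card V : ℝ) ^ 3 ≤ #(G.cliqueFinset 3) :=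
      hFar.le_card_cliqueFinset
    have h2 : (#(G.cliqueFinset 3) : ℝ) ≤ (Fintype.card V : ℝ) ^ 2 := by
      exact_mod_cast Nat.cast_le.2 hclique_le
    have hn' : (1 : ℝ) / δ < Fintype.card V := by
      have : ((⌈1 / δ⌉₊ : ℝ)) < Fintype.card V := by
        exact_mod_cast Nat.lt_of_lt_of_le (Nat.lt_succ_self _) (le_of_lt hn)
      exact lt_of_le_of_lt (Nat.le_ceil _) this
    have hnpos : (0 : ℝ) < Fintype.card V := by
      have : 0 < Fintype.card V := Nat.pos_of_ne_zero (by omega)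
      exact_mod_cast this
    have : (1 : ℝ) < δ * Fintype.card V := by
      rw [div_lt_iff₀ hδpos] at hn'; linarith
    nlinarith [sq_nonneg (Fintype.card V : ℝ), mul_pos hnpos hnpos]
  -- extract a small removal set
  have hex : ∃ s : Finset (Sym2 V), s ⊆ G.edgeFinset ∧
      (G.deleteEdges ↑s).CliqueFree 3 ∧ (#s : ℝ) < ε' * ((Fintype.card V ^ 2 : ℕ) : ℝ) := by
    by_contra hcon
    push_neg at hcon
    exact hnotfar fun s hsub hfree => hcon s hsub hfree
  obtain ⟨s, hsub, hfree, hcard⟩ := hex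
  have hinj : #(G.cliqueFinset 3) ≤ #s :=
    cliqueFinset_card_le_of_deleteEdges G hLL.edgeDisjointTriangles s hsub hfree
  have hncard : (G.edgeSet.ncard : ℝ) = (#G.edgeFinset : ℝ) := by
    congr 1
    simp [Set.ncard_eq_toFinset_card', SimpleGraph.edgeFinset]
  rw [hncard]
  have hε'le : ε' ≤ ε / 3 := min_le_left _ _
  have hn2 : (0 : ℝ) ≤ (Fintype.card V : ℝ) ^ 2 := by positivity
  have hcast : ((Fintype.card V ^ 2 : ℕ) : ℝ) = (Fintype.card V : ℝ) ^ 2 := by push_cast; ring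
  rw [hcast] at hcard
  have : (#G.edgeFinset : ℝ) = 3 * #(G.cliqueFinset 3) := by exact_mod_cast hedge_eq
  rw [this]
  have h3 : (#(G.cliqueFinset 3) : ℝ) ≤ #s := by exact_mod_cast hinj
  nlinarith
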